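/- Model Composition is symmetric in consequence: with a, b ∈ ℝⁿ and c defined as c_k = a_{k-n} + b_{k-n} - Σ_{j+ℓ=k+1} a_j·b_ℓ (indices of a, b in 1..n, zero otherwise), if b solves a sequence z : ℤ → ℝ in the length-n sense, then c solves z in the length-2n sense. -/

import Mathlib

lemma shift_sum {n : ℕ} (w : Fin n → ℝ) (f : ℕ → ℝ) :
    (∑ k : Fin (2 * n),
        (if h : n ≤ (k : ℕ) then w ⟨(k : ℕ) - n, Nat.sub_lt_left_of_lt_add h (by have := k.isLt; omega)⟩ else 0) * f (k : ℕ))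
    = ∑ j : Fin n, w j * f (n + (j : ℕ)) := by
  classical
  set W : ℕ → ℝ := fun i => if h : i < n then w ⟨i, h⟩ else 0 with hW
  have h1 : (∑ k : Fin (2 * n),
        (if h : n ≤ (k : ℕ) then w ⟨(k : ℕ) - n, Nat.sub_lt_left_of_lt_add h (by have := k.isLt; omega)⟩ else 0) * f (k : ℕ))
      = ∑ k : Fin (2 * n), (if n ≤ (k : ℕ) then W ((k : ℕ) - n) else 0) * f (k : ℕ) := by
    refine Finset.sum_congr rfl fun k _ => ?_
    by_cases h : n ≤ (k : ℕ)
    · have hk : (k : ℕ) - n < n := by have := k.isLt; omega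
      simp [h, hW, hk]
    · simp [h]
  rw [h1, Fin.sum_univ_eq_sum_range (fun k => (if n ≤ k then W (k - n) else 0) * f k) (2 * n)]
  have h2 : 2 * n = n + n := by ring
  rw [h2, Finset.range_eq_Ico,
    ← Finset.sum_Ico_consecutive _ (Nat.zero_le n) (by omega : n ≤ n + n)]
  have h3 : (∑ k ∈ Finset.Ico 0 n, (if n ≤ k then W (k - n) else 0) * f k) = 0 := by
    refine Finset.sum_eq_zero fun k hk => ?_
    simp only [Finset.mem_Ico] at hk
    simp [Nat.not_le.mpr hk.2]
  rw [h3, zero_add, Finset.sum_Ico_eq_sum_range]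
  have h4 : n + n - n = n := by omega
  rw [h4, ← Fin.sum_univ_eq_sum_range]
  refine Finset.sum_congr rfl fun j _ => ?_
  have hj : (j : ℕ) < n := j.isLt
  simp [hW, hj]

lemma cross_sum {n : ℕ} (a b : Fin n → ℝ) (f : ℕ → ℝ) :
    (∑ k : Fin (2 * n),
        (∑ j : Fin n, ∑ l : Fin n, if (j : ℕ) + (l : ℕ) = (k : ℕ) then a j * b l else 0) * f (k : ℕ))
    = ∑ j : Fin n, ∑ l : Fin n, a j * b l * f ((j : ℕ) + (l : ℕ)) := by
  classical
  simp only [Finset.sum_mul]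
  rw [Finset.sum_comm]
  refine Finset.sum_congr rfl fun j _ => ?_
  rw [Finset.sum_comm]
  refine Finset.sum_congr rfl fun l _ => ?_
  have hjl : (j : ℕ) + (l : ℕ) < 2 * n := by have := j.isLt; have := l.isLt; omega
  rw [Finset.sum_eq_single (⟨(j : ℕ) + (l : ℕ), hjl⟩ : Fin (2 * n))]
  · simp
  · intro k _ hk
    have hne : (j : ℕ) + (l : ℕ) ≠ (k : ℕ) := by
      intro h
      exact hk (Fin.ext h.symm)
    simp [hne]
  · simp

/-- Model composition is symmetric in consequence: if `b` solves `z` in the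
length-`n` sense, then the composition `c` of `a` and `b` solves `z` in the
length-`2n` sense. -/
theorem stmt_6 (n : ℕ) (a b : Fin n → ℝ) (c : Fin (2 * n) → ℝ) (z : ℤ → ℝ)
    (hb : ∀ m : ℤ, (∑ i : Fin n, b i * z (m + (i : ℕ))) = z (m + (n : ℕ)))
    (hc : ∀ k : Fin (2 * n),
      c k =
        (if h : n ≤ (k : ℕ) then a ⟨(k : ℕ) - n, by have := k.isLt; omega⟩ else 0)
        + (if h : n ≤ (k : ℕ) then b ⟨(k : ℕ) - n, by have := k.isLt; omega⟩ else 0)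
        - ∑ j : Fin n, ∑ l : Fin n,
            if (j : ℕ) + (l : ℕ) = (k : ℕ) then a j * b l else 0) :
    ∀ m : ℤ, (∑ k : Fin (2 * n), c k * z (m + (k : ℕ))) = z (m + (2 * n : ℕ)) := by
  intro m
  have hexpand : (∑ k : Fin (2 * n), c k * z (m + (k : ℕ)))
      = (∑ k : Fin (2 * n),
          (if h : n ≤ (k : ℕ) then a ⟨(k : ℕ) - n, by have := k.isLt; omega⟩ else 0)
            * z (m + (k : ℕ)))
      + (∑ k : Fin (2 * n),
          (if h : n ≤ (k : ℕ) then b ⟨(k : ℕ) - n, by have := k.isLt; omega⟩ else 0)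
            * z (m + (k : ℕ)))
      - (∑ k : Fin (2 * n),
          (∑ j : Fin n, ∑ l : Fin n, if (j : ℕ) + (l : ℕ) = (k : ℕ) then a j * b l else 0)
            * z (m + (k : ℕ))) := by
    rw [← Finset.sum_add_distrib, ← Finset.sum_sub_distrib]
    refine Finset.sum_congr rfl fun k _ => ?_
    rw [hc k]; ring
  rw [hexpand, shift_sum a (fun i => z (m + (i : ℕ))), shift_sum b (fun i => z (m + (i : ℕ))),
    cross_sum a b (fun i => z (m + (i : ℕ)))]
  have hA : (∑ j : Fin n, a j * z (m + ((n + (j : ℕ) : ℕ) : ℤ)))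
      = ∑ j : Fin n, ∑ l : Fin n, a j * b l * z (m + (((j : ℕ) + (l : ℕ) : ℕ) : ℤ)) := by
    refine Finset.sum_congr rfl fun j _ => ?_
    have hbj := hb (m + (j : ℕ))
    have hz : z (m + ((n + (j : ℕ) : ℕ) : ℤ))
        = ∑ l : Fin n, b l * z (m + (((j : ℕ) + (l : ℕ) : ℕ) : ℤ)) := by
      have h1 : m + ((n + (j : ℕ) : ℕ) : ℤ) = m + (j : ℕ) + (n : ℕ) := by push_cast; ring
      rw [h1, ← hbj]
      refine Finset.sum_congr rfl fun l _ => ?_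
      congr 1
      push_cast; ring
    rw [hz, Finset.mul_sum]
    exact Finset.sum_congr rfl fun l _ => by ring
  have hB : (∑ j : Fin n, b j * z (m + ((n + (j : ℕ) : ℕ) : ℤ))) = z (m + ((2 * n : ℕ) : ℤ)) := by
    have hbn := hb (m + (n : ℕ))
    have h1 : m + ((2 * n : ℕ) : ℤ) = m + (n : ℕ) + (n : ℕ) := by push_cast; ring
    rw [h1, ← hbn]
    refine Finset.sum_congr rfl fun j _ => ?_
    congr 1
    push_cast; ring
  rw [hA, hB]
  ring
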